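/- arXiv:2505.08539 — 2 statements merged into one kernel-verified Lean document; each statement's English description precedes it below -/
import Mathlib

section
/- Let Γ be a canonical signed unicyclic graph with girth g ≡ 0 or 2 (mod 4), not equal to its cycle, with k ≥ 1 pendant stars whose removal leaves signed paths P_{l₁}^σ, …, P_{l_k}^σ with g = k + l₁ + ⋯ + l_k. Then i₋(Γ) = ⌈g/2⌉ if and only if all of l₁, …, l_k are odd. -/
open Matrix

/-- A signed graph: a simple graph together with a `±1` sign on each edge. -/
structure SignedGraph (V : Type*) where
  G : SimpleGraph V
  sign : V → V → ℝ
  sign_symm : ∀ u v, sign u v = sign v u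
  sign_pm : ∀ u v, G.Adj u v → sign u v = 1 ∨ sign u v = -1

namespace SignedGraph

variable {V : Type*} [Fintype V] [DecidableEq V]

open scoped Classical

/-- The (signed) adjacency matrix of a signed graph. -/
noncomputable def adjMatrix (Γ : SignedGraph V) : Matrix V V ℝ :=
  fun u v => if Γ.G.Adj u v then Γ.sign u v else 0

lemma isHermitian (Γ : SignedGraph V) : Γ.adjMatrix.IsHermitian := by
  classical
  ext u v
  simp only [adjMatrix, Matrix.conjTranspose_apply, star_trivial]
  by_cases h : Γ.G.Adj v u
  · simp [h, h.symm, Γ.sign_symm v u]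
  · have h' : ¬ Γ.G.Adj u v := fun hh => h hh.symm
    simp [h, h']

/-- number of positive eigenvalues (with multiplicity). -/
noncomputable def posInertia (Γ : SignedGraph V) : ℕ :=
  (Finset.univ.filter fun i => 0 < Γ.isHermitian.eigenvalues i).card

/-- number of negative eigenvalues (with multiplicity). -/
noncomputable def negInertia (Γ : SignedGraph V) : ℕ :=
  (Finset.univ.filter fun i => Γ.isHermitian.eigenvalues i < 0).card

/-- multiplicity of the eigenvalue zero. -/
noncomputable def nullity (Γ : SignedGraph V) : ℕ :=
  (Finset.univ.filter fun i => Γ.isHermitian.eigenvalues i = 0).card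

/-- The sign of an (unordered) edge. -/
def edgeSign (Γ : SignedGraph V) : Sym2 V → ℝ :=
  Sym2.lift ⟨Γ.sign, Γ.sign_symm⟩

/-- A signed graph is balanced if every cycle has positive sign. -/
def Balanced (Γ : SignedGraph V) : Prop :=
  ∀ (v : V) (w : Γ.G.Walk v v), w.IsCycle → (w.edges.map Γ.edgeSign).prod = 1

/-- Switching equivalence of two signed graphs on the same vertex set. -/
def SwitchingEquiv (Γ₁ Γ₂ : SignedGraph V) : Prop :=
  Γ₁.G = Γ₂.G ∧ ∃ θ : V → ℝ, (∀ v, θ v = 1 ∨ θ v = -1) ∧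
    ∀ u v, Γ₁.G.Adj u v → Γ₂.sign u v = θ u * Γ₁.sign u v * θ v

/-- The induced signed subgraph on a finite set of vertices. -/
noncomputable def inducedOn (Γ : SignedGraph V) (s : Finset V) :
    SignedGraph {x // x ∈ s} where
  G := { Adj := fun a b => Γ.G.Adj a b
         symm := ⟨fun a b h => Γ.G.adj_symm h⟩
         loopless := ⟨fun a h => Γ.G.irrefl h⟩ }
  sign := fun a b => Γ.sign a b
  sign_symm := fun a b => Γ.sign_symm a b
  sign_pm := fun a b h => Γ.sign_pm a b h

end SignedGraph





open Matrix Submodule Module Finset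

section NegTools

variable {n : Type*} [Fintype n] [DecidableEq n]

open scoped Classical

noncomputable def negCount (A : Matrix n n ℝ) (hA : A.IsHermitian) : ℕ :=
  (Finset.univ.filter fun i => hA.eigenvalues i < 0).card

def QF (A : Matrix n n ℝ) (x : n → ℝ) : ℝ := x ⬝ᵥ A.mulVec x

def NegDefOn (A : Matrix n n ℝ) (W : Submodule ℝ (n → ℝ)) : Prop :=
  ∀ x ∈ W, x ≠ 0 → QF A x < 0

def NonnegOn (A : Matrix n n ℝ) (W : Submodule ℝ (n → ℝ)) : Prop :=
  ∀ x ∈ W, 0 ≤ QF A x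

variable (A : Matrix n n ℝ) (hA : A.IsHermitian)

noncomputable def evec (i : n) : n → ℝ := ⇑(hA.eigenvectorBasis i)

lemma evec_orth (i j : n) : evec A hA i ⬝ᵥ evec A hA j = if i = j then 1 else 0 := by
  have h := orthonormal_iff_ite.mp (hA.eigenvectorBasis).orthonormal i j
  simpa [PiLp.inner_apply, RCLike.inner_apply, dotProduct, evec, mul_comm] using h

lemma evec_mulVec (i : n) : A.mulVec (evec A hA i) = hA.eigenvalues i • evec A hA i :=
  hA.mulVec_eigenvectorBasis i

lemma sum_dotProduct' {ι : Type*} (S : Finset ι) (f : ι → n → ℝ) (w : n → ℝ) :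
    (∑ i ∈ S, f i) ⬝ᵥ w = ∑ i ∈ S, f i ⬝ᵥ w := by
  simp only [dotProduct, Finset.sum_apply, Finset.sum_mul]
  rw [Finset.sum_comm]

lemma dotProduct_sum' {ι : Type*} (S : Finset ι) (w : n → ℝ) (f : ι → n → ℝ) :
    w ⬝ᵥ (∑ i ∈ S, f i) = ∑ i ∈ S, w ⬝ᵥ f i := by
  simp only [dotProduct, Finset.sum_apply, Finset.mul_sum]
  rw [Finset.sum_comm]

lemma evec_li (S : Finset n) : LinearIndependent ℝ (fun i : S => evec A hA i) := by
  rw [Fintype.linearIndependent_iff]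
  intro g hg j
  have h := congrArg (fun x => x ⬝ᵥ evec A hA (j : n)) hg
  rw [sum_dotProduct' Finset.univ (fun i : S => g i • evec A hA (i : n))] at h
  simp only [smul_dotProduct, zero_dotProduct, smul_eq_mul] at h
  rw [Finset.sum_eq_single j] at h
  · simpa [evec_orth] using h
  · intro b _ hbj
    have hne : (b : n) ≠ (j : n) := fun hc => hbj (Subtype.ext hc)
    simp [evec_orth, hne]
  · simp

lemma QF_sum_evec (S : Finset n) (c : n → ℝ) :
    QF A (∑ i ∈ S, c i • evec A hA i) = ∑ i ∈ S, hA.eigenvalues i * (c i)^2 := by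
  classical
  have hmv : A.mulVec (∑ i ∈ S, c i • evec A hA i)
      = ∑ i ∈ S, (c i * hA.eigenvalues i) • evec A hA i := by
    rw [← A.mulVecLin_apply, map_sum]
    refine Finset.sum_congr rfl fun i _ => ?_
    rw [LinearMap.map_smul, A.mulVecLin_apply, evec_mulVec]
    rw [smul_smul, mul_comm]
  rw [QF, hmv, sum_dotProduct']
  have : ∀ i ∈ S, (c i • evec A hA i) ⬝ᵥ (∑ j ∈ S, (c j * hA.eigenvalues j) • evec A hA j)
      = hA.eigenvalues i * (c i)^2 := by
    intro i hi
    rw [smul_dotProduct, dotProduct_sum']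
    simp only [dotProduct_smul, smul_eq_mul]
    rw [Finset.sum_eq_single i]
    · rw [evec_orth]; simp; ring
    · intro b _ hbi
      rw [evec_orth]
      simp [Ne.symm hbi]
    · intro h; exact absurd hi h
  exact Finset.sum_congr rfl this


lemma QF_sum_evec' (S : Finset n) (c : S → ℝ) :
    QF A (∑ i : S, c i • evec A hA (i : n)) = ∑ i : S, hA.eigenvalues (i : n) * (c i)^2 := by
  classical
  have hmv : A.mulVec (∑ i : S, c i • evec A hA (i : n))
      = ∑ i : S, (c i * hA.eigenvalues (i : n)) • evec A hA (i : n) := by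
    rw [← A.mulVecLin_apply, map_sum]
    refine Finset.sum_congr rfl fun i _ => ?_
    rw [LinearMap.map_smul, A.mulVecLin_apply, evec_mulVec]
    rw [smul_smul, mul_comm]
  rw [QF, hmv, sum_dotProduct' Finset.univ (fun i : S => c i • evec A hA (i : n))]
  refine Finset.sum_congr rfl fun i _ => ?_
  rw [smul_dotProduct, dotProduct_sum' Finset.univ _ (fun j : S => (c j * hA.eigenvalues (j : n)) • evec A hA (j : n))]
  simp only [dotProduct_smul, smul_eq_mul]
  rw [Finset.sum_eq_single i]
  · rw [evec_orth]; simp; ring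
  · intro b _ hbi
    have hne : (i : n) ≠ (b : n) := fun hc => hbi (Subtype.ext hc.symm)
    rw [evec_orth]; simp [hne]
  · intro h; exact absurd (Finset.mem_univ i) h

noncomputable def eigenSpan (S : Finset n) : Submodule ℝ (n → ℝ) :=
  Submodule.span ℝ (Set.range fun i : S => evec A hA (i : n))

lemma finrank_eigenSpan (S : Finset n) : finrank ℝ (eigenSpan A hA S) = S.card := by
  rw [eigenSpan, finrank_span_eq_card (evec_li A hA S)]
  simp

lemma negdef_eigenSpan (S : Finset n) (hS : ∀ i ∈ S, hA.eigenvalues i < 0) :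
    NegDefOn A (eigenSpan A hA S) := by
  intro x hx hx0
  obtain ⟨c, rfl⟩ := (mem_span_range_iff_exists_fun ℝ).mp hx
  have hne : ∃ i : S, c i ≠ 0 := by
    by_contra h
    push_neg at h
    exact hx0 (by simp [h])
  obtain ⟨i0, hi0⟩ := hne
  rw [QF_sum_evec']
  have : ∀ i ∈ (Finset.univ : Finset S), hA.eigenvalues (i : n) * (c i)^2 ≤ 0 := by
    intro i _
    exact mul_nonpos_of_nonpos_of_nonneg (le_of_lt (hS i i.2)) (sq_nonneg _)
  have hstrict : hA.eigenvalues (i0 : n) * (c i0)^2 < 0 :=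
    mul_neg_of_neg_of_pos (hS i0 i0.2) (by positivity)
  calc ∑ i : S, hA.eigenvalues (i : n) * (c i)^2
      < ∑ _i : S, (0:ℝ) := by
        refine Finset.sum_lt_sum this ⟨i0, Finset.mem_univ _, hstrict⟩
    _ = 0 := by simp

lemma nonneg_eigenSpan (S : Finset n) (hS : ∀ i ∈ S, 0 ≤ hA.eigenvalues i) :
    NonnegOn A (eigenSpan A hA S) := by
  intro x hx
  obtain ⟨c, rfl⟩ := (mem_span_range_iff_exists_fun ℝ).mp hx
  rw [QF_sum_evec']
  exact Finset.sum_nonneg fun i _ => mul_nonneg (hS i i.2) (sq_nonneg _)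

lemma exists_ne_zero_mem_inf (W U : Submodule ℝ (n → ℝ))
    (h : Fintype.card n < finrank ℝ W + finrank ℝ U) : ∃ x, x ∈ W ⊓ U ∧ x ≠ 0 := by
  have hne : W ⊓ U ≠ ⊥ := by
    intro hbot
    have h1 := Submodule.finrank_sup_add_finrank_inf_eq W U
    rw [hbot, finrank_bot] at h1
    have h2 : finrank ℝ ↥(W ⊔ U) ≤ Fintype.card n := by
      have := Submodule.finrank_le (W ⊔ U)
      rwa [Module.finrank_fintype_fun_eq_card] at this
    omega
  obtain ⟨x, hx, hx0⟩ := Submodule.exists_mem_ne_zero_of_ne_bot hne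
  exact ⟨x, hx, hx0⟩

lemma negdef_nonneg_bound (W U : Submodule ℝ (n → ℝ))
    (hW : NegDefOn A W) (hU : NonnegOn A U) :
    finrank ℝ W + finrank ℝ U ≤ Fintype.card n := by
  by_contra h
  push_neg at h
  obtain ⟨x, hx, hx0⟩ := exists_ne_zero_mem_inf W U h
  have h1 := hW x hx.1 hx0
  have h2 := hU x hx.2
  linarith

lemma negCount_le_card : negCount A hA ≤ Fintype.card n :=
  le_trans (Finset.card_filter_le _ _) (by simp)

lemma exists_negdef : ∃ W, NegDefOn A W ∧ finrank ℝ W = negCount A hA :=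
  ⟨eigenSpan A hA (Finset.univ.filter fun i => hA.eigenvalues i < 0),
    negdef_eigenSpan A hA _ (fun i hi => (Finset.mem_filter.mp hi).2),
    finrank_eigenSpan A hA _⟩

lemma exists_nonneg : ∃ U, NonnegOn A U ∧ finrank ℝ U = Fintype.card n - negCount A hA := by
  refine ⟨eigenSpan A hA (Finset.univ.filter fun i => ¬ hA.eigenvalues i < 0),
    nonneg_eigenSpan A hA _ (fun i hi => not_lt.mp (Finset.mem_filter.mp hi).2), ?_⟩
  rw [finrank_eigenSpan]
  have := Finset.card_filter_add_card_filter_not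
    (s := (Finset.univ : Finset n)) (p := fun i => hA.eigenvalues i < 0)
  simp only [Finset.card_univ] at this
  rw [negCount]
  omega

lemma negdef_le (W : Submodule ℝ (n → ℝ)) (hW : NegDefOn A W) :
    finrank ℝ W ≤ negCount A hA := by
  obtain ⟨U, hU, hUrk⟩ := exists_nonneg A hA
  have := negdef_nonneg_bound A W U hW hU
  have h2 := negCount_le_card A hA
  omega

lemma nonneg_le (U : Submodule ℝ (n → ℝ)) (hU : NonnegOn A U) :
    negCount A hA + finrank ℝ U ≤ Fintype.card n := by
  obtain ⟨W, hW, hWrk⟩ := exists_negdef A hA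
  have := negdef_nonneg_bound A W U hW hU
  omega


lemma negCount_le_congr {n' : Type*} [Fintype n'] [DecidableEq n']
    (B : Matrix n' n' ℝ) (hB : B.IsHermitian)
    (L : (n → ℝ) →ₗ[ℝ] (n' → ℝ)) (hinj : Function.Injective L)
    (hQ : ∀ x, QF B (L x) = QF A x) : negCount A hA ≤ negCount B hB := by
  obtain ⟨W, hW, hrk⟩ := exists_negdef A hA
  have hmap : NegDefOn B (W.map L) := by
    rintro x hx hx0
    obtain ⟨w, hw, rfl⟩ := hx
    have hw0 : w ≠ 0 := by rintro rfl; exact hx0 (map_zero L)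
    rw [hQ]
    exact hW w hw hw0
  have hfr : finrank ℝ (W.map L) = finrank ℝ W :=
    (LinearEquiv.finrank_eq (Submodule.equivMapOfInjective L hinj W)).symm
  have := negdef_le B hB (W.map L) hmap
  omega

lemma negCount_congr {n' : Type*} [Fintype n'] [DecidableEq n']
    (B : Matrix n' n' ℝ) (hB : B.IsHermitian)
    (L : (n → ℝ) ≃ₗ[ℝ] (n' → ℝ))
    (hQ : ∀ x, QF B (L x) = QF A x) : negCount A hA = negCount B hB := by
  refine le_antisymm (negCount_le_congr A hA B hB L.toLinearMap L.injective hQ) ?_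
  refine negCount_le_congr B hB A hA L.symm.toLinearMap L.symm.injective fun y => ?_
  have := hQ (L.symm y)
  simpa using this.symm

lemma negCount_congr_matrix {B : Matrix n n ℝ} (hB : B.IsHermitian) (h : A = B) :
    negCount A hA = negCount B hB := by subst h; rfl

lemma negCount_reindex {m : Type*} [Fintype m] [DecidableEq m] (e : m ≃ n)
    (hsub : (A.submatrix e e).IsHermitian) :
    negCount (A.submatrix e e) hsub = negCount A hA := by
  refine negCount_congr _ _ A hA (LinearEquiv.funCongrLeft ℝ ℝ e.symm) fun x => ?_
  have hL : ∀ j, (LinearEquiv.funCongrLeft ℝ ℝ e.symm x) j = x (e.symm j) := fun j => rfl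
  simp only [QF, dotProduct, Matrix.mulVec, dotProduct]
  rw [← Equiv.sum_comp e (fun j => _ )]
  · refine Finset.sum_congr rfl fun i _ => ?_
    rw [hL, e.symm_apply_apply]
    congr 1
    rw [← Equiv.sum_comp e (fun j => _ )]
    refine Finset.sum_congr rfl fun i' _ => ?_
    rw [hL, e.symm_apply_apply]
    rfl

lemma negCount_eq_zero (h : ∀ x y, A x y = 0) : negCount A hA = 0 := by
  have hQ : NonnegOn A ⊤ := by
    intro x _
    have : A.mulVec x = 0 := by
      funext i; simp [Matrix.mulVec, dotProduct, h]
    rw [QF, this]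
    simp
  have := nonneg_le A hA ⊤ hQ
  rw [finrank_top, Module.finrank_fintype_fun_eq_card] at this
  omega

end NegTools

section Pendant

open Matrix Submodule Module

variable {n : Type*} [Fintype n] [DecidableEq n]

open scoped Classical

noncomputable def ext0 (u v : n) : ({x : n // x ≠ u ∧ x ≠ v} → ℝ) →ₗ[ℝ] (n → ℝ) where
  toFun z x := if h : x ≠ u ∧ x ≠ v then z ⟨x, h⟩ else 0
  map_add' a b := by funext x; by_cases h : x ≠ u ∧ x ≠ v <;> simp [h]
  map_smul' c a := by funext x; by_cases h : x ≠ u ∧ x ≠ v <;> simp [h]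

lemma ext0_apply_mem (u v : n) (z : {x : n // x ≠ u ∧ x ≠ v} → ℝ)
    (x : n) (h : x ≠ u ∧ x ≠ v) : ext0 u v z x = z ⟨x, h⟩ := dif_pos h

lemma ext0_apply_u (u v : n) (z : {x : n // x ≠ u ∧ x ≠ v} → ℝ) :
    ext0 u v z u = 0 := dif_neg (by simp)

lemma ext0_apply_v (u v : n) (z : {x : n // x ≠ u ∧ x ≠ v} → ℝ) :
    ext0 u v z v = 0 := dif_neg (by simp)

lemma sum_subtype_pair (u v : n) (F : n → ℝ) (hu : F u = 0) (hv : F v = 0) :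
    ∑ x, F x = ∑ x : {x : n // x ≠ u ∧ x ≠ v}, F x := by
  classical
  rw [← Finset.sum_filter_add_sum_filter_not Finset.univ (fun x => x ≠ u ∧ x ≠ v)]
  have h2 : ∑ x ∈ Finset.univ.filter (fun x => ¬(x ≠ u ∧ x ≠ v)), F x = 0 := by
    refine Finset.sum_eq_zero fun x hx => ?_
    rcases Finset.mem_filter.mp hx with ⟨-, hx⟩
    push_neg at hx
    by_cases hxu : x = u
    · rw [hxu]; exact hu
    · rw [hx hxu]; exact hv
  rw [h2, add_zero]
  exact Finset.sum_subtype _ (fun x => by simp) F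

set_option maxHeartbeats 2000000 in
theorem negCount_pendant (A : Matrix n n ℝ) (hA : A.IsHermitian) (u v : n)
    (huv : u ≠ v) (huu : A u u = 0) (hvv : A v v = 0) (hvu : A v u ≠ 0)
    (hrow : ∀ x, x ≠ u → A v x = 0) :
    negCount A hA =
      negCount (A.submatrix (Subtype.val : {x : n // x ≠ u ∧ x ≠ v} → n) Subtype.val)
        (hA.submatrix _) + 1 := by
  classical
  set s : ℝ := A v u with hs
  set A' := A.submatrix (Subtype.val : {x : n // x ≠ u ∧ x ≠ v} → n) Subtype.val with hA'def
  have hA' : A'.IsHermitian := hA.submatrix _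
  have hsym : ∀ x y, A x y = A y x := fun x y => by
    have := hA.apply x y; simpa using this.symm
  have hmvadd : ∀ x y : n → ℝ, A.mulVec (x + y) = A.mulVec x + A.mulVec y := fun x y => by
    rw [← A.mulVecLin_apply, map_add]; rfl
  have hmvsmul : ∀ (c : ℝ) (x : n → ℝ), A.mulVec (c • x) = c • A.mulVec x := fun c x => by
    rw [← A.mulVecLin_apply, LinearMap.map_smul]; rfl
  have hdotsym : ∀ x y : n → ℝ, x ⬝ᵥ A.mulVec y = y ⬝ᵥ A.mulVec x := by
    intro x y
    simp only [dotProduct, Matrix.mulVec, dotProduct, Finset.mul_sum]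
    rw [Finset.sum_comm]
    exact Finset.sum_congr rfl fun i _ => Finset.sum_congr rfl fun j _ => by
      rw [hsym i j]; ring
  have hbil : ∀ x y : n → ℝ, QF A (x + y) = QF A x + 2 * (x ⬝ᵥ A.mulVec y) + QF A y := by
    intro x y
    simp only [QF, hmvadd, add_dotProduct, dotProduct_add]
    rw [hdotsym y x]
    ring
  have hQsmul : ∀ (c : ℝ) (x : n → ℝ), QF A (c • x) = c^2 * QF A x := by
    intro c x
    simp only [QF, hmvsmul, smul_dotProduct, dotProduct_smul, smul_eq_mul]
    ring
  have hdotsingle : ∀ (x : n → ℝ) (w : n), x ⬝ᵥ Pi.single w 1 = x w := by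
    intro x w
    simp [dotProduct, Pi.single_apply]
  have hAv : A.mulVec ((Pi.single v 1 : n → ℝ)) = s • (Pi.single u 1 : n → ℝ) := by
    funext x
    simp only [Matrix.mulVec_single, mul_one, Pi.smul_apply, Pi.single_apply, smul_eq_mul,
      MulOpposite.op_one, one_smul, Matrix.col_apply]
    by_cases hxu : x = u
    · rw [hxu, hsym u v]
      simp [hs, Pi.single_apply]
    · rw [hsym x v, hrow x hxu]; simp [hxu]
  have hcolu : A.mulVec ((Pi.single u 1 : n → ℝ)) = fun x => A x u := by
    funext x; simp [Matrix.mulVec_single]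
  set E := ext0 u v with hE
  let φ : ({x : n // x ≠ u ∧ x ≠ v} → ℝ) →ₗ[ℝ] ℝ :=
    { toFun := fun z => -(1/s) * (E z ⬝ᵥ (fun x => A x u))
      map_add' := fun a b => by
        rw [map_add, add_dotProduct]; ring
      map_smul' := fun c a => by
        rw [LinearMap.map_smul, smul_dotProduct]; simp; ring }
  set Λ := E + φ.smulRight ((Pi.single v 1 : n → ℝ)) with hΛ
  have hΛapp : ∀ z, Λ z = E z + (φ z) • (Pi.single v 1 : n → ℝ) := fun z => rfl
  have hΛu : ∀ z, Λ z u = 0 := by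
    intro z
    rw [hΛapp]
    simp [ext0_apply_u, Pi.single_apply, Ne.symm huv, hE]
  have hΛmem : ∀ z (x : n) (h : x ≠ u ∧ x ≠ v), Λ z x = z ⟨x, h⟩ := by
    intro z x h
    rw [hΛapp]
    simp [Pi.single_apply, h.2, hE, ext0_apply_mem u v z x h]
  have hΛinj : Function.Injective Λ := by
    intro a b hab
    funext x
    have := congrFun hab (x : n)
    rwa [hΛmem a x x.2, hΛmem b x x.2] at this
  -- QF of extension
  have hQE : ∀ z, QF A (E z) = QF A' z := by
    intro z
    have h1 : QF A (E z) = ∑ x : {x : n // x ≠ u ∧ x ≠ v}, E z x * (A.mulVec (E z)) x := by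
      rw [QF, dotProduct]
      exact sum_subtype_pair u v _ (by rw [ext0_apply_u]; ring) (by rw [ext0_apply_v]; ring)
    rw [h1]
    rw [QF, dotProduct]
    refine Finset.sum_congr rfl fun x _ => ?_
    rw [ext0_apply_mem u v z x x.2, Subtype.coe_eta]
    congr 1
    rw [Matrix.mulVec, dotProduct]
    have h2 : ∑ y, A x y * E z y = ∑ y : {x : n // x ≠ u ∧ x ≠ v}, A x y * E z y :=
      sum_subtype_pair u v _ (by rw [ext0_apply_u]; ring) (by rw [ext0_apply_v]; ring)
    rw [h2, Matrix.mulVec, dotProduct]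
    refine Finset.sum_congr rfl fun y _ => ?_
    rw [ext0_apply_mem u v z y y.2, Subtype.coe_eta]
    rfl
  have hEAv : ∀ z, E z ⬝ᵥ A.mulVec ((Pi.single v 1 : n → ℝ)) = 0 := by
    intro z
    rw [hAv, dotProduct_smul, hdotsingle, ext0_apply_u]
    simp
  have hQsinglev : QF A ((Pi.single v 1 : n → ℝ)) = 0 := by
    rw [QF, hAv, dotProduct_smul, hdotsingle]
    simp [Pi.single_apply, huv]
  have hQΛ : ∀ z, QF A (Λ z) = QF A' z := by
    intro z
    rw [hΛapp, hbil, hQE, hQsmul, hQsinglev, hmvsmul, dotProduct_smul, hEAv]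
    simp
  -- special vectors
  have hy : ∀ τ : ℝ, A.mulVec ((Pi.single u 1 : n → ℝ) + τ • (Pi.single v 1 : n → ℝ))
      = (fun x => A x u) + (τ * s) • (Pi.single u 1 : n → ℝ) := by
    intro τ
    rw [hmvadd, hmvsmul, hAv, hcolu, smul_smul]
  have hQy : ∀ τ : ℝ, QF A ((Pi.single u 1 : n → ℝ) + τ • (Pi.single v 1 : n → ℝ)) = 2 * τ * s := by
    intro τ
    rw [QF, hy, dotProduct_add, dotProduct_smul, hdotsingle]
    simp only [add_dotProduct, smul_dotProduct, smul_eq_mul]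
    have e1 : (Pi.single u 1 : n → ℝ) ⬝ᵥ (fun x => A x u) = A u u := by
      simp [single_dotProduct]
    have e2 : (Pi.single v 1 : n → ℝ) ⬝ᵥ (fun x => A x u) = A v u := by
      simp [single_dotProduct]
    rw [e1, e2]
    simp only [Pi.add_apply, Pi.smul_apply, Pi.single_apply, smul_eq_mul]
    rw [huu]
    simp [huv, Ne.symm huv, hs]
    ring
  have hcross : ∀ z (τ : ℝ), Λ z ⬝ᵥ A.mulVec ((Pi.single u 1 : n → ℝ) + τ • (Pi.single v 1 : n → ℝ)) = 0 := by
    intro z τ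
    rw [hy, dotProduct_add, dotProduct_smul, hdotsingle, hΛu]
    rw [hΛapp, add_dotProduct, smul_dotProduct]
    have e2 : (Pi.single v 1 : n → ℝ) ⬝ᵥ (fun x => A x u) = s := by
      simp [single_dotProduct, hs]
    rw [e2]
    simp only [smul_eq_mul, mul_zero, add_zero]
    show E z ⬝ᵥ (fun x => A x u) + (-(1/s) * (E z ⬝ᵥ (fun x => A x u))) * s = 0
    field_simp
    ring
  -- dimension of sup with a vector nonzero at u
  have hsup : ∀ (M : Submodule ℝ (n → ℝ)), (∀ x ∈ M, x u = 0) → ∀ y : n → ℝ, y u = 1 →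
      finrank ℝ ↥(M ⊔ span ℝ {y}) = finrank ℝ M + 1 := by
    intro M hM y hyu
    have hdisj : M ⊓ span ℝ {y} = ⊥ := by
      rw [eq_bot_iff]
      rintro x ⟨hxM, hxs⟩
      obtain ⟨c, rfl⟩ := Submodule.mem_span_singleton.mp hxs
      have := hM _ hxM
      rw [Pi.smul_apply, hyu, smul_eq_mul, mul_one] at this
      subst this
      simp
    have h1 := Submodule.finrank_sup_add_finrank_inf_eq M (span ℝ {y})
    rw [hdisj, finrank_bot, add_zero] at h1
    rw [h1, finrank_span_singleton (by intro h; rw [h] at hyu; simpa using hyu)]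
  have hmapu : ∀ (M : Submodule ℝ ({x : n // x ≠ u ∧ x ≠ v} → ℝ)),
      ∀ x ∈ M.map Λ, x u = 0 := by
    rintro M x ⟨z, _, rfl⟩
    exact hΛu z
  have hmaprank : ∀ (M : Submodule ℝ ({x : n // x ≠ u ∧ x ≠ v} → ℝ)),
      finrank ℝ ↥(M.map Λ) = finrank ℝ M := fun M =>
    (LinearEquiv.finrank_eq (Submodule.equivMapOfInjective Λ hΛinj M)).symm
  have hyu' : ∀ τ : ℝ, ((Pi.single u 1 : n → ℝ) + τ • (Pi.single v 1 : n → ℝ) : n → ℝ) u = 1 := by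
    intro τ
    simp [Pi.single_apply, Ne.symm huv]
  have hcard : Fintype.card {x : n // x ≠ u ∧ x ≠ v} = Fintype.card n - 2 := by
    rw [Fintype.card_subtype]
    have he : (Finset.univ.filter fun x => x ≠ u ∧ x ≠ v) = Finset.univ \ {u, v} := by
      ext x; simp [not_or]
    rw [he, Finset.card_sdiff_of_subset (by simp), Finset.card_pair huv]
    simp
  set r := negCount A' hA' with hr
  -- decomposition of members of sup
  have hdecomp : ∀ (M : Submodule ℝ ({x : n // x ≠ u ∧ x ≠ v} → ℝ)) (y : n → ℝ)
      (x : n → ℝ), x ∈ M.map Λ ⊔ span ℝ {y} →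
      ∃ (z : {x : n // x ≠ u ∧ x ≠ v} → ℝ) (c : ℝ), z ∈ M ∧ x = Λ z + c • y := by
    intro M y x hx
    rw [Submodule.mem_sup] at hx
    obtain ⟨a, ha, b, hb, rfl⟩ := hx
    obtain ⟨z, hz, rfl⟩ := ha
    obtain ⟨c, rfl⟩ := Submodule.mem_span_singleton.mp hb
    exact ⟨z, c, hz, rfl⟩
  have hQdecomp : ∀ (τ : ℝ) z (c : ℝ),
      QF A (Λ z + c • ((Pi.single u 1 : n → ℝ) + τ • (Pi.single v 1 : n → ℝ)))
        = QF A' z + c^2 * (2 * τ * s) := by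
    intro τ z c
    rw [hbil, hQΛ, hmvsmul, dotProduct_smul, hcross, hQsmul, hQy]
    simp
  have hs2 : 0 < s^2 := by positivity
  -- lower bound
  have hlow : r + 1 ≤ negCount A hA := by
    obtain ⟨W, hW, hWrk⟩ := exists_negdef A' hA'
    set y := (Pi.single u 1 : n → ℝ) + (-s) • (Pi.single v 1 : n → ℝ) with hydef
    have hnd : NegDefOn A (W.map Λ ⊔ span ℝ {y}) := by
      intro x hx hx0
      obtain ⟨z, c, hz, rfl⟩ := hdecomp W y x hx
      rw [hydef, hQdecomp]
      have hza : QF A' z ≤ 0 := by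
        by_cases hz0 : z = 0
        · subst hz0; simp [QF]
        · exact le_of_lt (hW z hz hz0)
      by_cases hc : c = 0
      · subst hc
        have hz0 : z ≠ 0 := by
          rintro rfl
          apply hx0
          simp
        have := hW z hz hz0
        simpa using this
      · have : c^2 * (2 * (-s) * s) < 0 := by
          have : c^2 > 0 := by positivity
          nlinarith
        linarith
    have hrk : finrank ℝ ↥(W.map Λ ⊔ span ℝ {y}) = r + 1 := by
      rw [hsup _ (hmapu W) y (hyu' (-s)), hmaprank, hWrk]
    have := negdef_le A hA _ hnd
    omega
  -- upper bound
  have hup : negCount A hA ≤ r + 1 := by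
    obtain ⟨U, hU, hUrk⟩ := exists_nonneg A' hA'
    set y := (Pi.single u 1 : n → ℝ) + s • (Pi.single v 1 : n → ℝ) with hydef
    have hnn : NonnegOn A (U.map Λ ⊔ span ℝ {y}) := by
      intro x hx
      obtain ⟨z, c, hz, rfl⟩ := hdecomp U y x hx
      rw [hydef, hQdecomp]
      have h1 := hU z hz
      nlinarith [sq_nonneg c]
    have hrk : finrank ℝ ↥(U.map Λ ⊔ span ℝ {y}) = (Fintype.card n - 2 - r) + 1 := by
      rw [hsup _ (hmapu U) y (hyu' s), hmaprank, hUrk, hcard]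
    have h1 := nonneg_le A hA _ hnn
    have h2 : r ≤ Fintype.card n - 2 := by
      have := negCount_le_card A' hA'
      rwa [hcard] at this
    have h3 : 2 ≤ Fintype.card n := by
      have : u ∈ (Finset.univ : Finset n) := Finset.mem_univ u
      have hsub : {u, v} ⊆ (Finset.univ : Finset n) := by simp
      calc 2 = ({u, v} : Finset n).card := (Finset.card_pair huv).symm
        _ ≤ _ := Finset.card_le_card hsub
        _ = Fintype.card n := by simp
    omega
  omega

end Pendant

section Elim

open Matrix Submodule Module

variable {V : Type*} [Fintype V] [DecidableEq V]

open scoped Classical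

noncomputable def negOn (A : Matrix V V ℝ) (hA : A.IsHermitian) (s : Finset V) : ℕ :=
  negCount (A.submatrix (Subtype.val : {x // x ∈ s} → V) Subtype.val) (hA.submatrix _)

lemma negOn_zero (A : Matrix V V ℝ) (hA : A.IsHermitian) (s : Finset V)
    (h : ∀ x ∈ s, ∀ y ∈ s, A x y = 0) : negOn A hA s = 0 :=
  negCount_eq_zero _ _ (fun x y => h x x.2 y y.2)

def eUniv : {x : V // x ∈ (Finset.univ : Finset V)} ≃ V where
  toFun := Subtype.val
  invFun := fun x => ⟨x, Finset.mem_univ x⟩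
  left_inv := fun x => rfl
  right_inv := fun x => rfl

lemma negOn_univ (A : Matrix V V ℝ) (hA : A.IsHermitian) :
    negOn A hA Finset.univ = negCount A hA := by
  let e : {x : V // x ∈ (Finset.univ : Finset V)} ≃ V := eUniv
  have hmat : A.submatrix (Subtype.val : {x // x ∈ (Finset.univ : Finset V)} → V) Subtype.val
      = A.submatrix e e := rfl
  rw [negOn, negCount_congr_matrix _ _ (by rw [← hmat]; exact hA.submatrix _) hmat]
  exact negCount_reindex A hA e _

lemma negOn_pendant (A : Matrix V V ℝ) (hA : A.IsHermitian) (s : Finset V) (u v : V)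
    (hu : u ∈ s) (hv : v ∈ s) (huv : u ≠ v) (huu : A u u = 0) (hvv : A v v = 0)
    (hvu : A v u ≠ 0) (hrow : ∀ x ∈ s, A v x ≠ 0 → x = u) :
    negOn A hA s = negOn A hA ((s.erase u).erase v) + 1 := by
  classical
  set B := A.submatrix (Subtype.val : {x // x ∈ s} → V) Subtype.val with hBdef
  have hB : B.IsHermitian := hA.submatrix _
  set u' : {x // x ∈ s} := ⟨u, hu⟩
  set v' : {x // x ∈ s} := ⟨v, hv⟩
  have h1 := negCount_pendant B hB u' v'
    (by intro h; exact huv (congrArg Subtype.val h))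
    huu hvv hvu
    (by
      rintro ⟨x, hx⟩ hxu
      by_contra h0
      apply hxu
      exact Subtype.ext (hrow x hx h0))
  let e : {x : {x // x ∈ s} // x ≠ u' ∧ x ≠ v'} ≃ {x : V // x ∈ (s.erase u).erase v} :=
    { toFun := fun x => ⟨x.val.val, by
        rw [Finset.mem_erase, Finset.mem_erase]
        refine ⟨fun h => x.2.2 (Subtype.ext h), fun h => x.2.1 (Subtype.ext h), x.val.2⟩⟩
      invFun := fun y => ⟨⟨y.val, Finset.mem_of_mem_erase (Finset.mem_of_mem_erase y.2)⟩, by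
        have h2 := Finset.mem_erase.mp y.2
        have h3 := Finset.mem_erase.mp h2.2
        exact ⟨fun h => h3.1 (congrArg Subtype.val h), fun h => h2.1 (congrArg Subtype.val h)⟩⟩
      left_inv := fun x => by ext; rfl
      right_inv := fun y => by ext; rfl }
  have hmat : B.submatrix (Subtype.val : {x : {x // x ∈ s} // x ≠ u' ∧ x ≠ v'} → _) Subtype.val
      = (A.submatrix (Subtype.val : {x // x ∈ (s.erase u).erase v} → V) Subtype.val).submatrix e e := rfl
  rw [negOn, h1, negCount_congr_matrix _ _ (by rw [← hmat]; exact hB.submatrix _) hmat,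
    negCount_reindex _ (hA.submatrix _) e _]
  rfl

def ElimChain (A : Matrix V V ℝ) : Finset V → List (V × V) → Finset V → Prop
  | s, [], t => s = t
  | s, (v, u) :: L, t => v ∈ s ∧ u ∈ s ∧ v ≠ u ∧ A v u ≠ 0 ∧
      (∀ x ∈ s, A v x ≠ 0 → x = u) ∧ ElimChain A ((s.erase u).erase v) L t

lemma ElimChain.append {A : Matrix V V ℝ} : ∀ {L₁ L₂ : List (V × V)} {s t r : Finset V},
    ElimChain A s L₁ t → ElimChain A t L₂ r → ElimChain A s (L₁ ++ L₂) r := by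
  intro L₁
  induction L₁ with
  | nil =>
    intro L₂ s t r h1 h2
    cases h1
    exact h2
  | cons p L ih =>
    obtain ⟨v, u⟩ := p
    rintro L₂ s t r ⟨hv, hu, hvu, hA0, hrow, hrest⟩ h2
    exact ⟨hv, hu, hvu, hA0, hrow, ih hrest h2⟩

lemma negOn_of_elim (A : Matrix V V ℝ) (hA : A.IsHermitian) (hdiag : ∀ x, A x x = 0) :
    ∀ (L : List (V × V)) (s t : Finset V), ElimChain A s L t →
    (∀ x ∈ t, ∀ y ∈ t, A x y = 0) → negOn A hA s = L.length := by
  intro L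
  induction L with
  | nil =>
    intro s t hchain hzero
    cases hchain
    exact negOn_zero A hA s hzero
  | cons p L ih =>
    obtain ⟨v, u⟩ := p
    rintro s t ⟨hv, hu, hvu, hA0, hrow, hrest⟩ hzero
    rw [negOn_pendant A hA s u v hu hv (Ne.symm hvu) (hdiag u) (hdiag v) hA0 hrow,
      ih _ _ hrest hzero]
    simp

end Elim

section ListHelpers

variable {V : Type*}

def pathListF (F : ℕ → V) : ℕ → ℕ → List (V × V)
  | _, 0 => []
  | i, Nat.succ d => (F (2*i+1), F (2*i+2)) :: pathListF F (i+1) d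

lemma pathListF_length (F : ℕ → V) : ∀ d i, (pathListF F i d).length = d := by
  intro d
  induction d with
  | zero => intro i; rfl
  | succ d ih => intro i; simp [pathListF, ih]

def listFromF (gap : ℕ → List (V × V)) : ℕ → ℕ → List (V × V)
  | _, 0 => []
  | t, Nat.succ d => gap t ++ listFromF gap (t+1) d

lemma listFromF_length (gap : ℕ → List (V × V)) : ∀ d t,
    (listFromF gap t d).length = ∑ i ∈ Finset.range d, (gap (t + i)).length := by
  intro d
  induction d with
  | zero => intro t; simp [listFromF]
  | succ d ih =>
    intro t
    rw [Finset.sum_range_succ']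
    simp only [listFromF, List.length_append, ih (t+1)]
    have : ∀ i, t + 1 + i = t + (i + 1) := by omega
    simp only [this, Nat.add_zero]
    omega

lemma exists_interval (S : ℕ → ℕ) (k d : ℕ) (h0 : S 0 = 0) (hd : d < S k) :
    ∃ t < k, S t ≤ d ∧ d < S (t+1) := by
  induction k with
  | zero => omega
  | succ k ih =>
    by_cases h : d < S k
    · obtain ⟨t, ht, h1, h2⟩ := ih h
      exact ⟨t, by omega, h1, h2⟩
    · exact ⟨k, by omega, by omega, hd⟩

end ListHelpers

theorem canonical_unicyclic_negInertia_even_girth {V : Type*} [Fintype V] [DecidableEq V]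
    (Γ : SignedGraph V) (hconn : Γ.G.Connected)
    (g : ℕ) (hg : 3 ≤ g) (hmod : g % 4 = 0 ∨ g % 4 = 2)
    -- the unique cycle, enumerated by `f`
    (f : ZMod g → V) (hf : Function.Injective f)
    (hcyc : ∀ i : ZMod g, Γ.G.Adj (f i) (f (i + 1)))
    (hchord : ∀ i j : ZMod g, Γ.G.Adj (f i) (f j) → j = i + 1 ∨ i = j + 1)
    -- canonical: each off-cycle vertex is a pendant attached to exactly one cycle vertex
    (hcanon : ∀ x : V, x ∉ Set.range f → ∃! y : V, Γ.G.Adj x y)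
    (hleaf : ∀ x : V, x ∉ Set.range f → ∀ y : V, Γ.G.Adj x y → y ∈ Set.range f)
    -- the `k ≥ 1` major vertices `f (m j)` and the gap lengths `l j` between them
    (k : ℕ) [NeZero k] (l : ZMod k → ℕ) (m : ZMod k → ZMod g)
    (hmaj : ∀ j : ZMod k, ∃ x : V, x ∉ Set.range f ∧ Γ.G.Adj x (f (m j)))
    (hstep : ∀ j : ZMod k, m (j + 1) = m j + ((l j : ℕ) + 1 : ℕ))
    (hgap : ∀ j : ZMod k, ∀ t : ℕ, 1 ≤ t → t ≤ l j →
      ¬ ∃ x : V, x ∉ Set.range f ∧ Γ.G.Adj x (f (m j + (t : ℕ))))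
    (hsum : g = k + ∑ j : ZMod k, l j) :
    Γ.negInertia = (g + 1) / 2 ↔ ∀ j : ZMod k, Odd (l j) := by
  classical
  haveI : NeZero g := ⟨by omega⟩
  have hk : 0 < k := Nat.pos_of_ne_zero (NeZero.ne k)
  set A := Γ.adjMatrix with hAdef
  have hA : A.IsHermitian := Γ.isHermitian
  have hAne : ∀ x y, A x y ≠ 0 ↔ Γ.G.Adj x y := by
    intro x y
    constructor
    · intro h
      by_contra hadj
      simp [hAdef, SignedGraph.adjMatrix, hadj] at h
    · intro h
      rcases Γ.sign_pm x y h with h1 | h1 <;>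
        simp [hAdef, SignedGraph.adjMatrix, h, h1]
  have hdiag : ∀ x, A x x = 0 := fun x => by
    simp [hAdef, SignedGraph.adjMatrix, SimpleGraph.irrefl]
  -- pendant choices
  choose xp hxp1 hxp2 using hmaj
  have hxuniq : ∀ (j : ZMod k) (y : V), Γ.G.Adj (xp j) y → y = f (m j) := by
    intro j y hy
    obtain ⟨y₀, hy₀, huniq⟩ := hcanon (xp j) (hxp1 j)
    rw [huniq y hy, huniq _ (hxp2 j)]
  -- partial-sum bookkeeping
  set S : ℕ → ℕ := fun t => ∑ i ∈ Finset.range t, (l (i : ZMod k) + 1) with hSdef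
  have hS0 : S 0 = 0 := by simp [hSdef]
  have hSsucc : ∀ t, S (t + 1) = S t + (l (t : ZMod k) + 1) := by
    intro t
    simp [hSdef, Finset.sum_range_succ]
  have hSmono : ∀ a b, a ≤ b → S a ≤ S b := by
    intro a b hab
    exact Finset.sum_le_sum_of_subset (Finset.range_subset_range.mpr hab)
  have hsumcast : ∀ F : ZMod k → ℕ, ∑ i ∈ Finset.range k, F (i : ZMod k) = ∑ j : ZMod k, F j := by
    intro F
    refine Finset.sum_bij' (fun i _ => ((i : ZMod k))) (fun j _ => j.val) ?_ ?_ ?_ ?_ ?_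
    · intro i _; exact Finset.mem_univ _
    · intro j _; exact Finset.mem_range.mpr (ZMod.val_lt j)
    · intro i hi
      exact ZMod.val_cast_of_lt (Finset.mem_range.mp hi)
    · intro j _
      exact ZMod.natCast_rightInverse j
    · intro i _; rfl
  have hSk : S k = g := by
    rw [hSdef]
    simp only [Finset.sum_add_distrib, Finset.sum_const, Finset.card_range, smul_eq_mul, mul_one]
    rw [hsumcast l]
    omega
  have hSlt : ∀ t, t < k → S t + l (t : ZMod k) < g := by
    intro t ht
    have h1 := hSmono (t + 1) k ht
    rw [hSsucc] at h1
    omega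
  have hmS : ∀ t : ℕ, m (t : ZMod k) = m 0 + ((S t : ℕ) : ZMod g) := by
    intro t
    induction t with
    | zero => simp [hS0]
    | succ t ih =>
      have h1 : ((t + 1 : ℕ) : ZMod k) = (t : ZMod k) + 1 := by push_cast; ring
      rw [h1, hstep, ih, hSsucc]
      push_cast
      ring
  have hcastinj : ∀ a b : ℕ, a < g → b < g → ((a : ℕ) : ZMod g) = b → a = b := by
    intro a b ha hb hab
    have h1 := ZMod.val_cast_of_lt ha
    have h2 := ZMod.val_cast_of_lt hb
    rw [hab] at h1
    omega
  have POSINJ : ∀ t r t' r', t < k → r ≤ l (t : ZMod k) → t' < k → r' ≤ l (t' : ZMod k) →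
      m (t : ZMod k) + (r : ZMod g) = m (t' : ZMod k) + (r' : ZMod g) → t = t' ∧ r = r' := by
    intro t r t' r' ht hr ht' hr' heq
    rw [hmS, hmS] at heq
    have h1 : ((S t + r : ℕ) : ZMod g) = ((S t' + r' : ℕ) : ZMod g) := by
      push_cast
      rw [add_assoc, add_assoc] at heq
      exact add_left_cancel heq
    have h2 : S t + r = S t' + r' :=
      hcastinj _ _ (by have := hSlt t ht; omega) (by have := hSlt t' ht'; omega) h1
    rcases Nat.lt_trichotomy t t' with hlt | heq' | hgt
    · exfalso
      have := hSmono (t + 1) t' hlt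
      rw [hSsucc] at this
      omega
    · subst heq'
      omega
    · exfalso
      have := hSmono (t' + 1) t hgt
      rw [hSsucc] at this
      omega
  have POSCOVER : ∀ q : ZMod g, ∃ t, t < k ∧ ∃ r, r ≤ l (t : ZMod k) ∧
      q = m (t : ZMod k) + (r : ZMod g) := by
    intro q
    set d : ℕ := (q - m 0).val with hd
    have hdg : d < g := ZMod.val_lt _
    have hq : q = m 0 + ((d : ℕ) : ZMod g) := by
      rw [hd, ZMod.natCast_val, ZMod.cast_id]
      ring
    obtain ⟨t, ht, h1, h2⟩ := exists_interval S k d hS0 (by omega)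
    rw [hSsucc] at h2
    refine ⟨t, ht, d - S t, by omega, ?_⟩
    rw [hmS, hq]
    have h4 : ((d : ℕ) : ZMod g) = ((S t : ℕ) : ZMod g) + ((d - S t : ℕ) : ZMod g) := by
      have h3 : d = S t + (d - S t) := by omega
      calc ((d : ℕ) : ZMod g) = ((S t + (d - S t) : ℕ) : ZMod g) := by rw [← h3]
        _ = _ := by push_cast; ring
    rw [h4]
    ring
  have minj : ∀ j j' : ZMod k, m j = m j' → j = j' := by
    intro j j' hjj
    have h1 : m ((j.val : ℕ) : ZMod k) = m ((j'.val : ℕ) : ZMod k) := by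
      rw [ZMod.natCast_rightInverse j, ZMod.natCast_rightInverse j']
      exact hjj
    have h2 : m ((j.val : ℕ) : ZMod k) + ((0 : ℕ) : ZMod g)
        = m ((j'.val : ℕ) : ZMod k) + ((0 : ℕ) : ZMod g) := by rw [h1]
    have h3 := POSINJ j.val 0 j'.val 0 (ZMod.val_lt j) (by omega) (ZMod.val_lt j') (by omega) h2
    have h4 : ((j.val : ℕ) : ZMod k) = ((j'.val : ℕ) : ZMod k) := by rw [h3.1]
    rwa [ZMod.natCast_rightInverse j, ZMod.natCast_rightInverse j'] at h4
  have hxinj : ∀ j j' : ZMod k, xp j = xp j' → j = j' := by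
    intro j j' hjj
    have h := hxuniq j (f (m j')) (by rw [hjj]; exact hxp2 j')
    exact minj _ _ (hf h).symm
  have hpend : ∀ z, z ∉ Set.range f → ∃ j : ZMod k, ∀ y, Γ.G.Adj z y → y = f (m j) := by
    intro z hz
    obtain ⟨y₀, hy₀, huniq⟩ := hcanon z hz
    obtain ⟨q, hq⟩ := hleaf z hz y₀ hy₀
    obtain ⟨t, ht, r, hr, hq'⟩ := POSCOVER q
    have hr0 : r = 0 := by
      by_contra hr0
      refine hgap (t : ZMod k) r (by omega) hr ⟨z, hz, ?_⟩
      rw [← hq', hq]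
      exact hy₀
    refine ⟨(t : ZMod k), fun y hy => ?_⟩
    rw [huniq y hy, ← hq, hq', hr0]
    simp
  -- the elimination data
  set Fp : ℕ → ℕ → V := fun t r => f (m (t : ZMod k) + (r : ZMod g)) with hFpdef
  set gapL : ℕ → List (V × V) :=
    fun t => (xp (t : ZMod k), Fp t 0) :: pathListF (Fp t) 0 (l (t : ZMod k) / 2) with hgapLdef
  set Rem1 : ℕ → ℕ → Finset V :=
    fun t i => insert (xp (t : ZMod k)) ((Finset.range (2*i+1)).image (Fp t)) with hRem1def
  set RAll : ℕ → Finset V :=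
    fun t => (Finset.range t).biUnion (fun t' => Rem1 t' (l (t' : ZMod k) / 2)) with hRAlldef
  have hFpx : ∀ t r j, Fp t r ≠ xp j := by
    intro t r j h
    exact hxp1 j ⟨_, h⟩
  have hFpinj : ∀ t r t' r', t < k → r ≤ l (t : ZMod k) → t' < k → r' ≤ l (t' : ZMod k) →
      Fp t r = Fp t' r' → t = t' ∧ r = r' := by
    intro t r t' r' ht hr ht' hr' h
    exact POSINJ t r t' r' ht hr ht' hr' (hf h)
  have hFp0 : ∀ t, Fp t 0 = f (m (t : ZMod k)) := by
    intro t
    rw [hFpdef]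
    norm_num
  have hadjFp : ∀ t r, Γ.G.Adj (Fp t r) (Fp t (r+1)) := by
    intro t r
    have h1 : m (t : ZMod k) + ((r + 1 : ℕ) : ZMod g)
        = (m (t : ZMod k) + (r : ZMod g)) + 1 := by push_cast; ring
    rw [hFpdef]
    simp only []
    rw [h1]
    exact hcyc _
  -- generic erase-to-sdiff helpers
  have herase2 : ∀ (s : Finset V) (u v : V) (R : Finset V),
      ((s \ R).erase u).erase v = s \ (insert v (insert u R)) := by
    intro s u v R
    ext z
    simp only [Finset.mem_erase, Finset.mem_sdiff, Finset.mem_insert]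
    tauto
  have hRem1succ : ∀ t i, Rem1 t (i+1)
      = insert (Fp t (2*i+1)) (insert (Fp t (2*i+2)) (Rem1 t i)) := by
    intro t i
    ext z
    simp only [hRem1def, Finset.mem_insert, Finset.mem_image, Finset.mem_range]
    constructor
    · rintro (h | ⟨r, hr, rfl⟩)
      · tauto
      · rcases Nat.lt_trichotomy r (2*i+1) with h1 | h1 | h1
        · exact Or.inr (Or.inr (Or.inr ⟨r, h1, rfl⟩))
        · subst h1; tauto
        · have : r = 2*i+2 := by omega
          subst this; tauto
    · rintro (rfl | rfl | h | ⟨r, hr, rfl⟩)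
      · exact Or.inr ⟨2*i+1, by omega, rfl⟩
      · exact Or.inr ⟨2*i+2, by omega, rfl⟩
      · tauto
      · exact Or.inr ⟨r, by omega, rfl⟩
  -- the path part of the elimination
  have pathchain : ∀ (t : ℕ), t < k → ∀ (s : Finset V),
      (∀ r, r ≤ l (t : ZMod k) → Fp t r ∈ s) → ∀ (d i : ℕ), i + d = l (t : ZMod k) / 2 →
      ElimChain A (s \ Rem1 t i) (pathListF (Fp t) i d)
        (s \ Rem1 t (l (t : ZMod k) / 2)) := by
    intro t ht s hsmem d
    induction d with
    | zero =>
      intro i hi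
      have h0 : i = l (t : ZMod k) / 2 := by omega
      subst h0
      show ElimChain A _ [] _
      rfl
    | succ d ih =>
      intro i hi
      have h21 : 2*i+1 ≤ l (t : ZMod k) := by omega
      have h22 : 2*i+2 ≤ l (t : ZMod k) := by omega
      have hnotmem : ∀ r', r' ≤ l (t : ZMod k) → 2*i+1 ≤ r' →
          Fp t r' ∉ Rem1 t i := by
        intro r' hr' hr2
        simp only [hRem1def, Finset.mem_insert, Finset.mem_image, Finset.mem_range]
        push_neg
        refine ⟨hFpx t r' _, fun r hr => ?_⟩
        intro hFr
        obtain ⟨-, hrr⟩ := hFpinj t r t r' ht (by omega) ht hr' hFr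
        omega
      show ElimChain A _ ((Fp t (2*i+1), Fp t (2*i+2)) :: _) _
      refine ⟨?_, ?_, ?_, ?_, ?_, ?_⟩
      · exact Finset.mem_sdiff.mpr ⟨hsmem _ h21, hnotmem _ h21 (by omega)⟩
      · exact Finset.mem_sdiff.mpr ⟨hsmem _ h22, hnotmem _ h22 (by omega)⟩
      · intro h
        have := hFpinj t (2*i+1) t (2*i+2) ht h21 ht h22 h
        omega
      · exact (hAne _ _).mpr (hadjFp t (2*i+1))
      · intro z hz h0
        have hadj := (hAne _ _).mp h0
        by_cases hzr : z ∈ Set.range f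
        · obtain ⟨q, rfl⟩ := hzr
          rcases hchord _ q hadj with hq | hq
          · rw [hq, hFpdef]
            show f _ = f _
            congr 1
            push_cast
            ring
          · exfalso
            have hq2 : q = m (t : ZMod k) + ((2*i : ℕ) : ZMod g) := by
              have he : m (t : ZMod k) + ((2*i+1 : ℕ) : ZMod g)
                  = (m (t : ZMod k) + ((2*i : ℕ) : ZMod g)) + 1 := by push_cast; ring
              rw [he] at hq
              exact (add_right_cancel hq.symm)
            have hmem : f q ∈ Rem1 t i := by
              simp only [hRem1def, Finset.mem_insert, Finset.mem_image, Finset.mem_range]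
              refine Or.inr ⟨2*i, by omega, ?_⟩
              rw [hFpdef, hq2]
            exact (Finset.mem_sdiff.mp hz).2 hmem
        · exfalso
          obtain ⟨j, hj⟩ := hpend z hzr
          have heq := hj _ hadj.symm
          have heq2 : m (t : ZMod k) + ((2*i+1 : ℕ) : ZMod g)
              = m ((j.val : ℕ) : ZMod k) + ((0 : ℕ) : ZMod g) := by
            rw [ZMod.natCast_rightInverse j]
            simp only [Nat.cast_zero, add_zero]
            have heq' := heq
            simp only [hFpdef] at heq'
            exact hf heq'
          have := POSINJ t (2*i+1) j.val 0 ht h21 (ZMod.val_lt j) (by omega) heq2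
          omega
      · have hstepset : ((s \ Rem1 t i).erase (Fp t (2*i+2))).erase (Fp t (2*i+1))
            = s \ Rem1 t (i+1) := by
          rw [herase2, hRem1succ]
        rw [hstepset]
        exact ih (i+1) (by omega)
  -- the per-gap elimination
  have gapchain : ∀ t, t < k → ∀ s : Finset V, xp (t : ZMod k) ∈ s →
      (∀ r, r ≤ l (t : ZMod k) → Fp t r ∈ s) →
      ElimChain A s (gapL t) (s \ Rem1 t (l (t : ZMod k) / 2)) := by
    intro t ht s hxs hFs
    show ElimChain A s ((xp (t : ZMod k), Fp t 0) :: _) _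
    refine ⟨hxs, hFs 0 (by omega), ?_, ?_, ?_, ?_⟩
    · exact fun h => hFpx t 0 _ h.symm
    · rw [hFp0]
      exact (hAne _ _).mpr (hxp2 _)
    · intro z hz h0
      rw [hFp0]
      exact hxuniq _ z ((hAne _ _).mp h0)
    · have hset : (s.erase (Fp t 0)).erase (xp (t : ZMod k)) = s \ Rem1 t 0 := by
        ext z
        simp only [Finset.mem_erase, Finset.mem_sdiff, hRem1def, Finset.mem_insert,
          Finset.mem_image, Finset.mem_range]
        constructor
        · rintro ⟨h1, h2, h3⟩
          refine ⟨h3, ?_⟩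
          rintro (rfl | ⟨r, hr, rfl⟩)
          · exact h1 rfl
          · have : r = 0 := by omega
            subst this
            exact h2 rfl
        · rintro ⟨h1, h2⟩
          push_neg at h2
          exact ⟨h2.1, fun h => h2.2 0 (by omega) h.symm, h1⟩
      rw [hset]
      exact pathchain t ht s hFs (l (t : ZMod k) / 2) 0 (by omega)
  have hcastk : ∀ a b : ℕ, a < k → b < k → ((a : ℕ) : ZMod k) = b → a = b := by
    intro a b ha hb hab
    have h1 := ZMod.val_cast_of_lt ha
    have h2 := ZMod.val_cast_of_lt hb
    rw [hab] at h1
    omega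
  have hnotRAll : ∀ (z : V) (T : ℕ), (∀ t', t' < T → z ≠ xp (t' : ZMod k)) →
      (∀ t' r', t' < T → r' ≤ l (t' : ZMod k) → z ≠ Fp t' r') → z ∉ RAll T := by
    intro z T hx hF hmem
    simp only [hRAlldef, Finset.mem_biUnion, Finset.mem_range] at hmem
    obtain ⟨t', ht', hmem⟩ := hmem
    simp only [hRem1def, Finset.mem_insert, Finset.mem_image, Finset.mem_range] at hmem
    rcases hmem with h1 | ⟨r, hr, h1⟩
    · exact hx t' ht' h1
    · exact hF t' r ht' (by omega) h1.symm
  -- the global elimination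
  have fullchain : ∀ d t, t + d = k →
      ElimChain A (Finset.univ \ RAll t) (listFromF gapL t d) (Finset.univ \ RAll k) := by
    intro d
    induction d with
    | zero =>
      intro t htk
      have : t = k := by omega
      subst this
      show ElimChain A _ [] _
      rfl
    | succ d ih =>
      intro t htk
      have ht : t < k := by omega
      show ElimChain A _ (gapL t ++ listFromF gapL (t+1) d) _
      have hxs : xp (t : ZMod k) ∈ Finset.univ \ RAll t := by
        rw [Finset.mem_sdiff]
        refine ⟨Finset.mem_univ _, hnotRAll _ t ?_ ?_⟩
        · intro t' ht' h
          have := hcastk t t' ht (by omega) (hxinj _ _ h)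
          omega
        · intro t' r' _ _ h
          exact hFpx t' r' _ h.symm
      have hFs : ∀ r, r ≤ l (t : ZMod k) → Fp t r ∈ Finset.univ \ RAll t := by
        intro r hr
        rw [Finset.mem_sdiff]
        refine ⟨Finset.mem_univ _, hnotRAll _ t ?_ ?_⟩
        · intro t' _ h
          exact hFpx t r _ h
        · intro t' r' ht' hr' h
          obtain ⟨h1, -⟩ := hFpinj t r t' r' ht hr (by omega) hr' h
          omega
      have hset : (Finset.univ \ RAll t) \ Rem1 t (l (t : ZMod k) / 2)
          = Finset.univ \ RAll (t+1) := by
        ext z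
        simp only [Finset.mem_sdiff, hRAlldef, Finset.mem_biUnion, Finset.mem_range,
          Finset.mem_univ, true_and]
        constructor
        · rintro ⟨h1, h2⟩
          rintro ⟨t', ht', hmem⟩
          rcases Nat.lt_or_ge t' t with h3 | h3
          · exact h1 ⟨t', h3, hmem⟩
          · have : t' = t := by omega
            subst this
            exact h2 hmem
        · intro h1
          constructor
          · rintro ⟨t', ht', hmem⟩
            exact h1 ⟨t', by omega, hmem⟩
          · intro hmem
            exact h1 ⟨t, by omega, hmem⟩
      exact ElimChain.append (hset ▸ gapchain t ht _ hxs hFs) (ih (t+1) (by omega))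
  -- the leftover set has zero matrix
  have hremmem : ∀ t r, t < k → r ≤ 2*(l (t : ZMod k)/2) → Fp t r ∈ RAll k := by
    intro t r ht hr
    simp only [hRAlldef, Finset.mem_biUnion, Finset.mem_range]
    refine ⟨t, ht, ?_⟩
    simp only [hRem1def, Finset.mem_insert, Finset.mem_image, Finset.mem_range]
    exact Or.inr ⟨r, by omega, rfl⟩
  have hmajmem : ∀ j : ZMod k, f (m j) ∈ RAll k := by
    intro j
    have h1 : f (m j) = Fp j.val 0 := by
      simp only [hFpdef]
      rw [ZMod.natCast_rightInverse j]
      simp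
    rw [h1]
    exact hremmem j.val 0 (ZMod.val_lt j) (by omega)
  have hnotR : ∀ z, z ∈ Finset.univ \ RAll k → z ∉ RAll k :=
    fun z hz => (Finset.mem_sdiff.mp hz).2
  have hnext : ∀ q : ZMod g, f q ∉ RAll k → f (q+1) ∈ RAll k := by
    intro q hq
    obtain ⟨t, ht, r, hr, rfl⟩ := POSCOVER q
    have hrr : ¬ (r ≤ 2*(l (t : ZMod k)/2)) := fun h => hq (hremmem t r ht h)
    have hrl : r = l (t : ZMod k) := by omega
    have hq1 : m (t : ZMod k) + (r : ZMod g) + 1 = m ((t : ZMod k) + 1) := by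
      rw [hstep, hrl]
      push_cast
      ring
    rw [hq1]
    exact hmajmem _
  have hfinal : ∀ z ∈ Finset.univ \ RAll k, ∀ w ∈ Finset.univ \ RAll k, A z w = 0 := by
    intro z hz w hw
    by_contra h0
    have hadj := (hAne _ _).mp h0
    by_cases hzr : z ∈ Set.range f
    · by_cases hwr : w ∈ Set.range f
      · obtain ⟨q, rfl⟩ := hzr
        obtain ⟨q', rfl⟩ := hwr
        rcases hchord q q' hadj with h1 | h1
        · exact hnotR _ hw (h1 ▸ hnext q (hnotR _ hz))
        · exact hnotR _ hz (h1 ▸ hnext q' (hnotR _ hw))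
      · obtain ⟨j, hj⟩ := hpend w hwr
        have h2 := hj z hadj.symm
        exact hnotR z hz (h2 ▸ hmajmem j)
    · obtain ⟨j, hj⟩ := hpend z hzr
      have h2 := hj w hadj
      exact hnotR w hw (h2 ▸ hmajmem j)
  -- length of the elimination list
  have hlen : (listFromF gapL 0 k).length = k + ∑ j : ZMod k, l j / 2 := by
    rw [listFromF_length]
    have hgl : ∀ i, (gapL (0 + i)).length = 1 + l (i : ZMod k) / 2 := by
      intro i
      simp [hgapLdef, pathListF_length]
      omega
    rw [Finset.sum_congr rfl (fun i _ => hgl i)]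
    rw [Finset.sum_add_distrib, Finset.sum_const, Finset.card_range, smul_eq_mul, mul_one]
    rw [hsumcast (fun j => l j / 2)]
  -- the main inertia computation
  have hR0 : Finset.univ \ RAll 0 = Finset.univ := by
    simp [hRAlldef]
  have hchain := fullchain k 0 (by omega)
  rw [hR0] at hchain
  have hmain : Γ.negInertia = k + ∑ j : ZMod k, l j / 2 := by
    have h00 : Γ.negInertia = negCount A hA := rfl
    rw [h00, ← negOn_univ A hA, negOn_of_elim A hA hdiag _ _ _ hchain hfinal, hlen]
  rw [hmain]
  -- final arithmetic
  have hgmod : g % 2 = 0 := by omega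
  have hsplit : ∑ j : ZMod k, l j = 2 * (∑ j : ZMod k, l j / 2) + ∑ j : ZMod k, l j % 2 := by
    rw [Finset.mul_sum, ← Finset.sum_add_distrib]
    exact (Finset.sum_congr rfl (fun j _ => (Nat.div_add_mod (l j) 2).symm))
  have hcardk : Fintype.card (ZMod k) = k := ZMod.card k
  have hble : ∑ j : ZMod k, l j % 2 ≤ k := by
    calc ∑ j : ZMod k, l j % 2 ≤ ∑ _j : ZMod k, 1 :=
          Finset.sum_le_sum (fun j _ => by omega)
      _ = k := by simp [hcardk]
  constructor
  · intro h j
    rw [Nat.odd_iff]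
    by_contra hodd
    have hj0 : l j % 2 = 0 := by omega
    have hlt : ∑ j' : ZMod k, l j' % 2 ≤ k - 1 := by
      have h1 : ∑ j' ∈ Finset.univ.erase j, l j' % 2 + l j % 2 = ∑ j' : ZMod k, l j' % 2 :=
        Finset.sum_erase_add Finset.univ (fun j' => l j' % 2) (Finset.mem_univ j)
      have h2 : ∑ j' ∈ Finset.univ.erase j, l j' % 2 ≤ (Finset.univ.erase j).card := by
        calc ∑ j' ∈ Finset.univ.erase j, l j' % 2 ≤ ∑ _j' ∈ Finset.univ.erase j, 1 :=
              Finset.sum_le_sum (fun j' _ => by omega)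
          _ = (Finset.univ.erase j).card := by simp
      have h3 : (Finset.univ.erase j).card = k - 1 := by
        rw [Finset.card_erase_of_mem (Finset.mem_univ j), Finset.card_univ, hcardk]
      omega
    omega
  · intro hodd
    have hb : ∑ j : ZMod k, l j % 2 = k := by
      calc ∑ j : ZMod k, l j % 2 = ∑ _j : ZMod k, 1 :=
            Finset.sum_congr rfl (fun j _ => Nat.odd_iff.mp (hodd j))
        _ = k := by simp [hcardk]
    omega
end

section
/- Let Γ be a connected signed graph on n vertices with girth g. Then η(Γ) ≤ n − g + 2, where η(Γ) is the nullity of the adjacency matrix of Γ. -/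
open Matrix

section AuxLemmas

open SimpleGraph Matrix

variable {V : Type*}

private lemma aux_support_getElem {G : SimpleGraph V} {a b : V} (p : G.Walk a b) :
    ∀ (i : ℕ) (hi : i < p.support.length), p.support[i] = p.getVert i := by
  induction p with
  | nil =>
    intro i hi
    simp only [SimpleGraph.Walk.support_nil, List.length_singleton] at hi
    have : i = 0 := by omega
    subst this
    simp [SimpleGraph.Walk.support_nil, SimpleGraph.Walk.getVert_zero]
  | cons h q ih =>
    intro i hi
    cases i with
    | zero => simp [SimpleGraph.Walk.support_cons, SimpleGraph.Walk.getVert_zero]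
    | succ n =>
      simp only [SimpleGraph.Walk.support_cons, List.getElem_cons_succ,
        SimpleGraph.Walk.getVert_cons_succ]
      exact ih n (by simpa [SimpleGraph.Walk.support_cons] using hi)

private lemma aux_map_range {α : Type*} (f : ℕ → α) (k p : ℕ) :
    (List.range (k + 1)).map (fun i => f (p + i)) =
      f p :: (List.range k).map (fun i => f (p + 1 + i)) := by
  rw [List.range_succ_eq_map, List.map_cons, List.map_map]
  refine List.cons_eq_cons.mpr ⟨congrArg f (Nat.add_zero p), ?_⟩
  apply List.map_congr_left
  intro i _
  simp only [Function.comp_apply]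
  exact congrArg f (by omega)

private lemma aux_chainWalk {G : SimpleGraph V} (u : ℕ → V) :
    ∀ (k p : ℕ), (∀ i, i < k → G.Adj (u (p + i)) (u (p + i + 1))) →
      ∃ q : G.Walk (u p) (u (p + k)),
        q.length = k ∧
        q.support = (List.range (k + 1)).map (fun i => u (p + i)) ∧
        q.edges = (List.range k).map (fun i => s(u (p + i), u (p + i + 1))) := by
  intro k
  induction k with
  | zero =>
    intro p _
    refine ⟨SimpleGraph.Walk.nil, rfl, ?_, by simp⟩
    simpa using (aux_map_range u 0 p).symm
  | succ k ih =>
    intro p hadj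
    obtain ⟨q, hlen, hsup, hedg⟩ := ih (p + 1) (fun i hi => by
      have h := hadj (i + 1) (by omega)
      have h1 : p + (i + 1) = p + 1 + i := by omega
      rw [h1] at h
      exact h)
    have h0 : G.Adj (u p) (u (p + 1)) := by simpa using hadj 0 (by omega)
    refine ⟨(SimpleGraph.Walk.cons h0 q).copy rfl (congrArg u (by omega)), ?_, ?_, ?_⟩
    · simp [hlen]
    · rw [SimpleGraph.Walk.support_copy, SimpleGraph.Walk.support_cons, hsup]
      exact (aux_map_range u (k + 1) p).symm
    · rw [SimpleGraph.Walk.edges_copy, SimpleGraph.Walk.edges_cons, hedg]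
      exact (aux_map_range (fun j => s(u j, u (j + 1))) k p).symm

private lemma aux_rank_ge {n : Type*} [Fintype n] [DecidableEq n] (A : Matrix n n ℝ) {k : ℕ}
    (r c : Fin k → n) (hdet : (A.submatrix r c).det ≠ 0) : k ≤ A.rank := by
  classical
  have hU : IsUnit (A.submatrix r c) :=
    (Matrix.isUnit_iff_isUnit_det _).2 (isUnit_iff_ne_zero.2 hdet)
  have hcols : LinearIndependent ℝ (fun j => (A.submatrix r c)ᵀ j) :=
    Matrix.linearIndependent_cols_iff_isUnit.2 hU
  have hli : LinearIndependent ℝ (fun j => Aᵀ (c j)) := by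
    apply LinearIndependent.of_comp (LinearMap.funLeft ℝ ℝ r)
    convert hcols with j
    rfl
  have h1 : k = Module.finrank ℝ (Submodule.span ℝ (Set.range fun j => Aᵀ (c j))) := by
    rw [finrank_span_eq_card hli, Fintype.card_fin]
  have h2 : Submodule.span ℝ (Set.range fun j => Aᵀ (c j)) ≤
      Submodule.span ℝ (Set.range Aᵀ) :=
    Submodule.span_mono (by rintro _ ⟨j, rfl⟩; exact ⟨c j, rfl⟩)
  rw [A.rank_eq_finrank_span_cols, h1]
  exact Submodule.finrank_mono h2

private lemma aux_nullity_rank [Fintype V] [DecidableEq V] (Γ : SignedGraph V) :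
    Γ.nullity + Γ.adjMatrix.rank = Fintype.card V := by
  classical
  rw [Γ.isHermitian.rank_eq_card_non_zero_eigs, SignedGraph.nullity, Fintype.card_subtype]
  have := Finset.card_filter_add_card_filter_not
    (s := (Finset.univ : Finset V)) (p := fun i => Γ.isHermitian.eigenvalues i = 0)
  convert this using 3 <;> simp

end AuxLemmas

/-- for a connected signed graph of order `n` and girth `g`,
`η(Γ) ≤ n - g + 2`. -/
theorem nullity_le_of_girth {V : Type*} [Fintype V] [DecidableEq V] (Γ : SignedGraph V)
    (hconn : Γ.G.Connected) (g : ℕ) (hg : Γ.G.egirth = g) :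
    Γ.nullity ≤ Fintype.card V - g + 2 := by
  classical
  have hac : ¬ Γ.G.IsAcyclic := by
    intro h
    rw [h.egirth_eq_top] at hg
    exact (ENat.top_ne_coe g) hg
  obtain ⟨a, w, hw, hlen⟩ := SimpleGraph.exists_egirth_eq_length.mpr hac
  have hgl : w.length = g := by
    rw [hg] at hlen
    exact_mod_cast hlen.symm
  have hg3 : 3 ≤ g := by
    have := hw.three_le_length
    omega
  set u := w.getVert with hu
  have hsuplen : w.support.length = g + 1 := by rw [SimpleGraph.Walk.length_support, hgl]
  have htl : w.support.tail.Nodup := hw.support_nodup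
  have htlen : w.support.tail.length = g := by
    rw [List.length_tail, hsuplen]
    omega
  have htl_get : ∀ (i : ℕ) (h : i < w.support.tail.length), w.support.tail[i] = u (i + 1) := by
    intro i h
    rw [List.getElem_tail]
    exact aux_support_getElem w (i + 1) (by omega)
  have key : ∀ i j, i < g → j < g → u (i + 1) = u (j + 1) → i = j := by
    intro i j hi hj he
    have hi' : i < w.support.tail.length := by rw [htlen]; exact hi
    have hj' : j < w.support.tail.length := by rw [htlen]; exact hj
    have h2 : w.support.tail[i] = w.support.tail[j] := by
      rw [htl_get i hi', htl_get j hj', he]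
    exact (htl.getElem_inj_iff).mp h2
  have h0g : u 0 = u g := by
    rw [hu, SimpleGraph.Walk.getVert_zero, ← hgl, SimpleGraph.Walk.getVert_length]
  have hinj : ∀ i j, i < j → j < g → u i ≠ u j := by
    intro i j hij hjg heq
    cases i with
    | zero =>
      obtain ⟨j', rfl⟩ : ∃ j', j = j' + 1 := ⟨j - 1, by omega⟩
      have h1 : u (j' + 1) = u ((g - 1) + 1) := by
        rw [show (g - 1) + 1 = g from by omega, ← h0g, heq]
      have := key j' (g - 1) (by omega) (by omega) h1
      omega
    | succ i' =>
      obtain ⟨j', rfl⟩ : ∃ j', j = j' + 1 := ⟨j - 1, by omega⟩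
      have := key i' j' (by omega) (by omega) heq
      omega
  have hnochord : ∀ p q, p + 2 ≤ q → q ≤ g - 2 → ¬ Γ.G.Adj (u p) (u q) := by
    intro p q hpq hq hadj
    obtain ⟨seg, hlen2, hsup2, hedg2⟩ := aux_chainWalk u (q - p) p (fun i hi => by
      rw [hu]
      exact w.adj_getVert_succ (by omega))
    have hpk : p + (q - p) = q := by omega
    let seg' := (seg.copy rfl (congrArg u hpk))
    have hpath : seg'.IsPath := by
      apply SimpleGraph.Walk.IsPath.mk'
      rw [SimpleGraph.Walk.support_copy, hsup2]
      apply List.Nodup.map_on ?_ List.nodup_range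
      intro x hx y hy hxy
      rw [List.mem_range] at hx hy
      by_contra hne
      rcases Nat.lt_or_ge x y with h | h
      · exact hinj (p + x) (p + y) (by omega) (by omega) hxy
      · have h' : y < x := by omega
        exact hinj (p + y) (p + x) (by omega) (by omega) hxy.symm
    have hcyc : (SimpleGraph.Walk.cons hadj.symm seg').IsCycle := by
      rw [SimpleGraph.Walk.cons_isCycle_iff]
      refine ⟨hpath, ?_⟩
      rw [SimpleGraph.Walk.edges_copy, hedg2]
      intro hmem
      simp only [List.mem_map, List.mem_range] at hmem
      obtain ⟨i, hi, hei⟩ := hmem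
      rw [Sym2.eq_iff] at hei
      rcases hei with ⟨h1, h2⟩ | ⟨h1, h2⟩
      · exact hinj p (p + i + 1) (by omega) (by omega) h2.symm
      · rcases Nat.eq_zero_or_pos i with rfl | hipos
        · exact hinj (p + 1) q (by omega) (by omega) (by simpa using h2)
        · exact hinj p (p + i) (by omega) (by omega) h1.symm
    have hclen : (SimpleGraph.Walk.cons hadj.symm seg').length = (q - p) + 1 := by
      simp [SimpleGraph.Walk.length_cons, seg', hlen2]
    have hge := SimpleGraph.le_egirth.mp (le_of_eq hg.symm) (u q) _ hcyc
    rw [hclen] at hge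
    have hge' : g ≤ (q - p) + 1 := by exact_mod_cast hge
    omega
  set r : Fin (g - 2) → V := fun i => u i with hr
  set c : Fin (g - 2) → V := fun i => u (i + 1) with hc
  set M := Γ.adjMatrix.submatrix r c with hM
  have hdiag : ∀ i : Fin (g - 2), M i i ≠ 0 := by
    intro i
    have hadj : Γ.G.Adj (u i) (u (i + 1)) := by
      rw [hu]
      exact w.adj_getVert_succ (by have := i.isLt; omega)
    have : M i i = Γ.sign (u i) (u (i + 1)) := by
      simp [hM, hr, hc, Matrix.submatrix_apply, SignedGraph.adjMatrix, hadj]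
    rw [this]
    rcases Γ.sign_pm _ _ hadj with h | h <;> rw [h] <;> norm_num
  have htri : M.BlockTriangular OrderDual.toDual := by
    intro i j hij
    have hij' : (i : ℕ) < j := hij
    have hna : ¬ Γ.G.Adj (u i) (u (j + 1)) :=
      hnochord i (j + 1) (by omega) (by have := j.isLt; omega)
    simp [hM, hr, hc, Matrix.submatrix_apply, SignedGraph.adjMatrix, hna]
  have hdet : M.det ≠ 0 := by
    rw [Matrix.det_of_lowerTriangular M htri]
    exact Finset.prod_ne_zero_iff.mpr fun i _ => hdiag i
  have hrank : g - 2 ≤ Γ.adjMatrix.rank := aux_rank_ge Γ.adjMatrix r c hdet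
  have hnr := aux_nullity_rank Γ
  omega
end
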